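/- Let x : ℝ → I be a C¹ strictly increasing bijection onto an open interval I ⊆ ℝ with x'(y) > 0 for all y, and let f₁, f₂ be positive-frequency functions. Assume that the map k ↦ |f̌₂^(k) f̌₁^(−k)|/k is Lebesgue integrable on (0,∞) and that (y,y') ↦ f₁(y) f₂(y') log[(x(y)−x(y'))/(y−y')] is Lebesgue integrable on ℝ². Then ∫₀^∞ (dk/(2k)) f̌₂^(k) f̌₁^(−k) = −(1/(4π)) ∬_{ℝ²} f₁(y) log[(x(y)−x(y'))/(y−y')] f₂(y') dy dy'. -/

import Mathlib

open MeasureTheory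

/-- Fourier transform convention: `ft g k = (1/√(2π)) ∫ g t e^{-ikt} dt`. -/
noncomputable def ft (g : ℝ → ℂ) (k : ℝ) : ℂ :=
  (1 / Real.sqrt (2 * Real.pi)) * ∫ t : ℝ, g t * Complex.exp (-(Complex.I * k * t))

open MeasureTheory Set Filter intervalIntegral


noncomputable def phi (t : ℝ) : ℂ := Complex.exp (-(Complex.I * t)) / t

lemma phi_contOn {s : Set ℝ} (hs : (0:ℝ) ∉ s) : ContinuousOn phi s := by
  apply ContinuousOn.div
  · exact (Complex.continuous_exp.comp (by continuity)).continuousOn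
  · exact Complex.continuous_ofReal.continuousOn
  · intro t ht h
    rw [Complex.ofReal_eq_zero] at h
    exact hs (h ▸ ht)

lemma pos_not_mem_uIcc {c d : ℝ} (hc : 0 < c) (hd : 0 < d) : (0:ℝ) ∉ Set.uIcc c d := by
  intro h0
  rcases Set.mem_uIcc.1 h0 with ⟨h1, _⟩ | ⟨h1, _⟩ <;> linarith

lemma phi_intInt {c d : ℝ} (hc : 0 < c) (hd : 0 < d) :
    IntervalIntegrable phi volume c d :=
  (phi_contOn (pos_not_mem_uIcc hc hd)).intervalIntegrable

lemma phi_norm {t : ℝ} (ht : 0 < t) : ‖phi t‖ = 1 / t := by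
  rw [phi, norm_div, Complex.norm_exp]
  simp [abs_of_pos ht]

-- the basic bound
lemma phi_integral_bound {c d : ℝ} (hc : 0 < c) (hd : 0 < d) :
    ‖∫ t in c..d, phi t‖ ≤ |Real.log (d / c)| := by
  refine le_trans (intervalIntegral.norm_integral_le_abs_integral_norm) ?_
  have h1 : ∫ t in c..d, ‖phi t‖ = ∫ t in c..d, 1 / t := by
    apply intervalIntegral.integral_congr
    intro t ht
    have h0 := pos_not_mem_uIcc hc hd
    have ht0 : 0 < t := by
      rcases Set.mem_uIcc.1 ht with ⟨h1, _⟩ | ⟨h1, _⟩ <;> linarith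
    exact phi_norm ht0
  rw [h1, integral_one_div (pos_not_mem_uIcc hc hd)]

lemma inv_contOn {s : Set ℝ} (hs : (0:ℝ) ∉ s) :
    ContinuousOn (fun t : ℝ => 1 / (t:ℂ)) s := by
  apply ContinuousOn.div continuousOn_const Complex.continuous_ofReal.continuousOn
  intro t ht h
  rw [Complex.ofReal_eq_zero] at h
  exact hs (h ▸ ht)

lemma subst_lemma {a δ K : ℝ} (ha : 0 < a) (hδ : 0 < δ) (hK : 0 < K) :
    ∫ k in δ..K, Complex.exp (-(Complex.I * k * a)) / k = ∫ t in (a*δ)..(a*K), phi t := by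
  have hcong : Set.EqOn (fun k : ℝ => Complex.exp (-(Complex.I * k * a)) / k)
      (fun k : ℝ => a • phi (a*k)) (Set.uIcc δ K) := by
    intro k hk
    have hk0 : 0 < k := by rcases Set.mem_uIcc.1 hk with ⟨h1,_⟩|⟨h1,_⟩ <;> linarith
    have hkc : (k:ℂ) ≠ 0 := by exact_mod_cast hk0.ne'
    have hac : (a:ℂ) ≠ 0 := by exact_mod_cast ha.ne'
    simp only [phi, Complex.real_smul, Complex.ofReal_mul]
    rw [show -(Complex.I * ((a:ℂ) * k)) = -(Complex.I * k * a) by ring]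
    field_simp
  rw [intervalIntegral.integral_congr hcong, intervalIntegral.integral_smul,
    intervalIntegral.integral_comp_mul_left phi (ne_of_gt ha), smul_smul,
    mul_inv_cancel₀ (ne_of_gt ha), one_smul]

lemma small_piece {a b δ : ℝ} (ha : 0 < a) (hb : 0 < b) (hδ : 0 < δ)
    (hsm : max a b * δ ≤ 1) :
    ‖(∫ t in (a*δ)..(b*δ), phi t) - (Real.log (b/a) : ℂ)‖ ≤ 2 * |b - a| * δ := by
  have haδ : 0 < a * δ := mul_pos ha hδ
  have hbδ : 0 < b * δ := mul_pos hb hδ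
  have h0 : (0:ℝ) ∉ Set.uIcc (a*δ) (b*δ) := pos_not_mem_uIcc haδ hbδ
  have hlog : (Real.log (b/a) : ℂ) = ∫ t in (a*δ)..(b*δ), 1 / (t:ℂ) := by
    have : (fun t : ℝ => 1 / (t:ℂ)) = fun t : ℝ => ((1/t : ℝ) : ℂ) := by
      funext t; push_cast; ring
    rw [this, intervalIntegral.integral_ofReal, integral_one_div h0,
      mul_div_mul_right b a (ne_of_gt hδ)]
  rw [hlog, ← intervalIntegral.integral_sub (phi_intInt haδ hbδ)
      ((inv_contOn h0).intervalIntegrable)]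
  have hb1 : ‖∫ t in (a*δ)..(b*δ), (phi t - 1/(t:ℂ))‖ ≤ 2 * |b*δ - a*δ| := by
    apply intervalIntegral.norm_integral_le_of_norm_le_const
    intro t ht
    have htmem : t ∈ Set.uIcc (a*δ) (b*δ) := Set.uIoc_subset_uIcc ht
    have ht0 : 0 < t := by
      rcases Set.mem_uIcc.1 htmem with ⟨h1, _⟩ | ⟨h1, _⟩ <;> linarith
    have htle : t ≤ 1 := by
      have : t ≤ max (a*δ) (b*δ) := by
        rcases Set.mem_uIcc.1 htmem with ⟨_, h2⟩ | ⟨_, h2⟩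
        · exact le_trans h2 le_sup_right
        · exact le_trans h2 le_sup_left
      calc t ≤ max (a*δ) (b*δ) := this
        _ = max a b * δ := by rw [max_mul_of_nonneg _ _ hδ.le]
        _ ≤ 1 := hsm
    have heq : phi t - 1/(t:ℂ) = (Complex.exp (-(Complex.I * t)) - 1) / t := by
      rw [phi, sub_div]
    rw [heq, norm_div]
    have habs : ‖(-(Complex.I * t))‖ = t := by
      simp [abs_of_pos ht0]
    have := Complex.norm_exp_sub_one_le (x := -(Complex.I * t)) (by rw [habs]; exact htle)
    rw [habs] at this
    have hnt : ‖((t:ℝ):ℂ)‖ = t := by simp [abs_of_pos ht0]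
    rw [hnt]
    calc ‖Complex.exp (-(Complex.I*t)) - 1‖ / t ≤ 2 * t / t := by
          gcongr
      _ = 2 := by field_simp
  calc ‖∫ t in (a*δ)..(b*δ), (phi t - 1/(t:ℂ))‖ ≤ 2 * |b*δ - a*δ| := hb1
    _ = 2 * |b - a| * δ := by rw [show b*δ - a*δ = (b-a)*δ by ring, abs_mul, abs_of_pos hδ]; ring

lemma norm_v (t : ℝ) : ‖Complex.I * Complex.exp (-(Complex.I * t))‖ = 1 := by
  rw [norm_mul, Complex.norm_exp]
  simp

lemma big_piece {a b K : ℝ} (ha : 0 < a) (hb : 0 < b) (hK : 0 < K) :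
    ‖∫ t in (a*K)..(b*K), phi t‖ ≤ (1/a + 1/b + |b - a| / (min a b)^2) / K := by
  set c := a * K with hc
  set d := b * K with hd
  have hc0 : 0 < c := mul_pos ha hK
  have hd0 : 0 < d := mul_pos hb hK
  have h0 : (0:ℝ) ∉ Set.uIcc c d := pos_not_mem_uIcc hc0 hd0
  set u : ℝ → ℂ := fun t => ((t:ℂ))⁻¹ with hu
  set u' : ℝ → ℂ := fun t => -(((t:ℂ))^2)⁻¹ with hu'
  set v : ℝ → ℂ := fun t => Complex.I * Complex.exp (-(Complex.I * t)) with hv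
  set v' : ℝ → ℂ := fun t => Complex.exp (-(Complex.I * t)) with hv'
  have hud : ∀ t ∈ Set.uIcc c d, HasDerivAt u (u' t) t := by
    intro t ht
    have ht0 : 0 < t := by rcases Set.mem_uIcc.1 ht with ⟨h1,_⟩|⟨h1,_⟩ <;> linarith
    have htc : (t:ℂ) ≠ 0 := by exact_mod_cast ht0.ne'
    have := (hasDerivAt_inv htc).comp_ofReal
    simpa [hu, hu'] using this
  have hvd : ∀ t ∈ Set.uIcc c d, HasDerivAt v (v' t) t := by
    intro t _
    have h1 : HasDerivAt (fun s : ℝ => -(Complex.I * s)) (-Complex.I) t := by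
      have : HasDerivAt (fun z : ℂ => -(Complex.I * z)) (-Complex.I) (t:ℂ) := by
        have h := ((hasDerivAt_id ((t:ℝ):ℂ)).const_mul Complex.I).neg
        simp only [mul_one] at h
        exact h
      exact this.comp_ofReal
    have h2 := (h1.cexp).const_mul Complex.I
    have : Complex.I * (Complex.exp (-(Complex.I * t)) * -Complex.I) = v' t := by
      simp only [hv']
      ring_nf
      simp [Complex.I_sq]
    rw [← this]
    exact h2
  have hu'int : IntervalIntegrable u' volume c d := by
    apply ContinuousOn.intervalIntegrable
    apply ContinuousOn.neg
    apply ContinuousOn.inv₀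
    · exact (Complex.continuous_ofReal.pow 2).continuousOn
    · intro t ht hz
      have ht0 : 0 < t := by rcases Set.mem_uIcc.1 ht with ⟨h1,_⟩|⟨h1,_⟩ <;> linarith
      have : (t:ℂ) = 0 := by
        have := pow_eq_zero_iff (n := 2) (by norm_num) |>.1 hz
        exact this
      rw [Complex.ofReal_eq_zero] at this
      linarith
  have hv'int : IntervalIntegrable v' volume c d :=
    (Complex.continuous_exp.comp (by continuity)).intervalIntegrable _ _
  have hparts := intervalIntegral.integral_mul_deriv_eq_deriv_mul hud hvd hu'int hv'int
  have hphi_eq : ∫ t in c..d, phi t = ∫ t in c..d, u t * v' t := by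
    apply intervalIntegral.integral_congr
    intro t ht
    have ht0 : 0 < t := by rcases Set.mem_uIcc.1 ht with ⟨h1,_⟩|⟨h1,_⟩ <;> linarith
    simp only [phi, hu, hv']
    rw [div_eq_mul_inv, mul_comm]
  have hmincd : min c d = min a b * K := (min_mul_of_nonneg _ _ hK.le).symm
  have hmin0 : 0 < min c d := lt_min hc0 hd0
  have hI : ‖∫ t in c..d, u' t * v t‖ ≤ (min c d)⁻¹^2 * |d - c| := by
    apply intervalIntegral.norm_integral_le_of_norm_le_const
    intro t ht
    rcases Set.mem_uIoc.1 ht with ⟨h1,h2⟩|⟨h1,h2⟩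
    all_goals {
      have ht0 : 0 < t := lt_of_le_of_lt hmin0.le (by
        first
        | exact lt_of_le_of_lt (min_le_left c d) h1
        | exact lt_of_le_of_lt (min_le_right c d) h1)
      have hmt : min c d ≤ t := le_of_lt (by
        first
        | exact lt_of_le_of_lt (min_le_left c d) h1
        | exact lt_of_le_of_lt (min_le_right c d) h1)
      have : ‖u' t * v t‖ = ((t:ℝ)^2)⁻¹ := by
        rw [norm_mul, norm_v, mul_one, hu']
        rw [norm_neg, norm_inv]
        norm_cast
        simp [abs_of_pos ht0, sq_abs]
      rw [this]
      rw [inv_pow]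
      apply inv_anti₀ (by positivity)
      exact pow_le_pow_left₀ hmin0.le hmt 2
    }
  have h1 : ‖u d * v d‖ = 1/d := by
    rw [norm_mul, norm_v, mul_one, hu, norm_inv]
    norm_cast
    simp [abs_of_pos hd0, one_div]
  have h2 : ‖u c * v c‖ = 1/c := by
    rw [norm_mul, norm_v, mul_one, hu, norm_inv]
    norm_cast
    simp [abs_of_pos hc0, one_div]
  calc ‖∫ t in c..d, phi t‖
      = ‖u d * v d - u c * v c - ∫ t in c..d, u' t * v t‖ := by rw [hphi_eq, hparts]
    _ ≤ ‖u d * v d - u c * v c‖ + ‖∫ t in c..d, u' t * v t‖ := norm_sub_le _ _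
    _ ≤ (‖u d * v d‖ + ‖u c * v c‖) + (min c d)⁻¹^2 * |d - c| := by
        gcongr
        exact norm_sub_le _ _
    _ = 1/d + 1/c + (min a b * K)⁻¹^2 * (|b - a| * K) := by
        rw [h1, h2, hmincd]
        congr 1
        rw [show d - c = (b - a) * K by rw [hd, hc]; ring, abs_mul, abs_of_pos hK]
    _ = (1/a + 1/b + |b - a| / (min a b)^2) / K := by
        have hm : (0:ℝ) < min a b := lt_min ha hb
        rw [hc, hd]
        field_simp
        ring

noncomputable def Jfun (a b : ℝ) (n : ℕ) : ℂ :=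
  ∫ k in Set.Ioc ((n:ℝ)⁻¹) (n:ℝ),
    (Complex.exp (-(Complex.I*k*a)) - Complex.exp (-(Complex.I*k*b)))/(2*(k:ℂ))

lemma expdiv_intInt (a : ℝ) {c d : ℝ} (hc : 0 < c) (hd : 0 < d) :
    IntervalIntegrable (fun k : ℝ => Complex.exp (-(Complex.I*k*a))/(k:ℂ)) volume c d := by
  apply ContinuousOn.intervalIntegrable
  apply ContinuousOn.div
  · exact (Complex.continuous_exp.comp (by continuity)).continuousOn
  · exact Complex.continuous_ofReal.continuousOn
  · intro t ht h
    rw [Complex.ofReal_eq_zero] at h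
    exact pos_not_mem_uIcc hc hd (h ▸ ht)

lemma Jfun_eq_pos {a b : ℝ} (ha : 0 < a) (hb : 0 < b) {n : ℕ} (hn : 1 ≤ n) :
    Jfun a b n = ((∫ t in (a*(n:ℝ)⁻¹)..(b*(n:ℝ)⁻¹), phi t)
      - ∫ t in (a*(n:ℝ))..(b*(n:ℝ)), phi t)/2 := by
  have hn1 : (1:ℝ) ≤ (n:ℝ) := by exact_mod_cast hn
  have hnpos : (0:ℝ) < n := by linarith
  set δ : ℝ := (n:ℝ)⁻¹ with hδdef
  have hδ : 0 < δ := by positivity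
  have hδ1 : δ ≤ 1 := by
    rw [hδdef]
    exact inv_le_one_of_one_le₀ hn1
  have hδK : δ ≤ (n:ℝ) := le_trans hδ1 hn1
  have hstep1 : Jfun a b n = ∫ k in δ..(n:ℝ),
      (Complex.exp (-(Complex.I*k*a)) - Complex.exp (-(Complex.I*k*b)))/(2*(k:ℂ)) := by
    rw [Jfun, intervalIntegral.integral_of_le hδK]
  rw [hstep1]
  have hptwise : (fun k : ℝ => (Complex.exp (-(Complex.I*k*a))
      - Complex.exp (-(Complex.I*k*b)))/(2*(k:ℂ)))
      = fun k : ℝ => (Complex.exp (-(Complex.I*k*a))/(k:ℂ)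
        - Complex.exp (-(Complex.I*k*b))/(k:ℂ))/2 := by
    funext k
    by_cases hk : (k:ℂ) = 0
    · rw [hk]; simp
    · field_simp
      -- fallback
      
  rw [hptwise, intervalIntegral.integral_div,
    intervalIntegral.integral_sub (expdiv_intInt a hδ hnpos) (expdiv_intInt b hδ hnpos),
    subst_lemma ha hδ hnpos, subst_lemma hb hδ hnpos]
  have h1 := intervalIntegral.integral_add_adjacent_intervals
    (phi_intInt (mul_pos ha hδ) (mul_pos ha hnpos))
    (phi_intInt (mul_pos ha hnpos) (mul_pos hb hnpos))
  have h2 := intervalIntegral.integral_add_adjacent_intervals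
    (phi_intInt (mul_pos ha hδ) (mul_pos hb hδ))
    (phi_intInt (mul_pos hb hδ) (mul_pos hb hnpos))
  linear_combination (h1 - h2)/2

lemma Jfun_zero (a b : ℝ) : Jfun a b 0 = 0 := by
  rw [Jfun]
  norm_num

lemma Jfun_conj (a b : ℝ) (n : ℕ) :
    Jfun a b n = (starRingEnd ℂ) (Jfun (-a) (-b) n) := by
  rw [Jfun, Jfun, ← integral_conj]
  apply setIntegral_congr_fun measurableSet_Ioc
  intro k _
  simp only [map_div₀, map_sub, ← Complex.exp_conj, map_neg, map_mul, Complex.conj_I,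
    Complex.conj_ofReal, map_ofNat, Complex.ofReal_neg]
  ring_nf

lemma Jfun_bound_pos {a b : ℝ} (ha : 0 < a) (hb : 0 < b) (n : ℕ) :
    ‖Jfun a b n‖ ≤ |Real.log (a/b)| := by
  rcases Nat.eq_zero_or_pos n with h0 | hn
  · rw [h0, Jfun_zero]; simp [abs_nonneg]
  · rw [Jfun_eq_pos ha hb hn]
    have hn1 : (1:ℝ) ≤ (n:ℝ) := by exact_mod_cast hn
    have hnpos : (0:ℝ) < n := by linarith
    have hδ : 0 < ((n:ℝ))⁻¹ := by positivity
    have hP := phi_integral_bound (mul_pos ha hδ) (mul_pos hb hδ)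
    have hQ := phi_integral_bound (mul_pos ha hnpos) (mul_pos hb hnpos)
    rw [mul_div_mul_right b a (ne_of_gt hδ)] at hP
    rw [mul_div_mul_right b a (ne_of_gt hnpos)] at hQ
    have hlogeq : |Real.log (b/a)| = |Real.log (a/b)| := by
      rw [show b/a = (a/b)⁻¹ by rw [inv_div], Real.log_inv, abs_neg]
    rw [hlogeq] at hP hQ
    calc ‖((∫ t in (a*(n:ℝ)⁻¹)..(b*(n:ℝ)⁻¹), phi t)
        - ∫ t in (a*(n:ℝ))..(b*(n:ℝ)), phi t)/2‖
        = ‖(∫ t in (a*(n:ℝ)⁻¹)..(b*(n:ℝ)⁻¹), phi t)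
          - ∫ t in (a*(n:ℝ))..(b*(n:ℝ)), phi t‖/2 := by
          rw [norm_div]; norm_num
      _ ≤ (|Real.log (a/b)| + |Real.log (a/b)|)/2 := by
          gcongr
          exact le_trans (norm_sub_le _ _) (by gcongr)
      _ = |Real.log (a/b)| := by ring

lemma Jfun_bound {a b : ℝ} (hab : 0 < a ∧ 0 < b ∨ a < 0 ∧ b < 0) (n : ℕ) :
    ‖Jfun a b n‖ ≤ |Real.log (a/b)| := by
  rcases hab with ⟨ha, hb⟩ | ⟨ha, hb⟩
  · exact Jfun_bound_pos ha hb n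
  · rw [Jfun_conj, RCLike.norm_conj]
    have := Jfun_bound_pos (a := -a) (b := -b) (by linarith) (by linarith) n
    rwa [neg_div_neg_eq] at this

lemma tendsto_inv_nat : Filter.Tendsto (fun n : ℕ => ((n:ℝ))⁻¹) atTop (nhds 0) :=
  tendsto_inv_atTop_zero.comp tendsto_natCast_atTop_atTop

lemma Jfun_tendsto_pos {a b : ℝ} (ha : 0 < a) (hb : 0 < b) :
    Filter.Tendsto (fun n : ℕ => Jfun a b n) atTop (nhds (-(Real.log (a/b) : ℂ)/2)) := by
  have hP : Filter.Tendsto (fun n : ℕ => ∫ t in (a*(n:ℝ)⁻¹)..(b*(n:ℝ)⁻¹), phi t)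
      atTop (nhds ((Real.log (b/a) : ℂ))) := by
    have h0 : Filter.Tendsto (fun n : ℕ => (∫ t in (a*(n:ℝ)⁻¹)..(b*(n:ℝ)⁻¹), phi t)
        - (Real.log (b/a) : ℂ)) atTop (nhds 0) := by
      apply squeeze_zero_norm'
      · have hev : ∀ᶠ n : ℕ in atTop, (max a b) * ((n:ℝ))⁻¹ ≤ 1 ∧ (0:ℝ) < ((n:ℝ))⁻¹ := by
          have h1 : ∀ᶠ n : ℕ in atTop, max a b ≤ (n:ℝ) := by
            have := tendsto_natCast_atTop_atTop (R := ℝ)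
            exact this.eventually_ge_atTop (max a b)
          filter_upwards [h1, Filter.eventually_ge_atTop 1] with n h1 h2
          have hn1 : (1:ℝ) ≤ (n:ℝ) := by exact_mod_cast h2
          have hnpos : (0:ℝ) < n := by linarith
          refine ⟨?_, by positivity⟩
          rw [show ((n:ℝ))⁻¹ = 1/(n:ℝ) by rw [one_div]]
          calc max a b * (1/(n:ℝ)) = max a b / n := by ring
            _ ≤ 1 := by
              rw [div_le_one hnpos]
              exact h1
        filter_upwards [hev] with n ⟨h1, h2⟩
        exact small_piece ha hb h2 h1
      · have : Filter.Tendsto (fun n : ℕ => 2 * |b - a| * ((n:ℝ))⁻¹) atTop (nhds (2 * |b-a| * 0)) :=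
          tendsto_inv_nat.const_mul _
        simpa using this
    have := h0.add_const ((Real.log (b/a) : ℂ))
    simpa using this
  have hQ : Filter.Tendsto (fun n : ℕ => ∫ t in (a*(n:ℝ))..(b*(n:ℝ)), phi t)
      atTop (nhds 0) := by
    apply squeeze_zero_norm'
    · filter_upwards [Filter.eventually_ge_atTop 1] with n h2
      have hn1 : (1:ℝ) ≤ (n:ℝ) := by exact_mod_cast h2
      exact big_piece ha hb (by linarith)
    · have h1 : Filter.Tendsto (fun n : ℕ => (1/a + 1/b + |b - a| / (min a b)^2) * ((n:ℝ))⁻¹)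
        atTop (nhds ((1/a + 1/b + |b - a| / (min a b)^2) * 0)) := tendsto_inv_nat.const_mul _
      simp only [mul_zero] at h1
      apply h1.congr
      intro n
      ring
  have hcore := (hP.sub hQ).div_const (2:ℂ)
  have heq : ((Real.log (b/a) : ℂ) - 0)/2 = -(Real.log (a/b) : ℂ)/2 := by
    rw [sub_zero, show b/a = (a/b)⁻¹ by rw [inv_div], Real.log_inv]
    push_cast
    ring
  rw [heq] at hcore
  apply hcore.congr'
  filter_upwards [Filter.eventually_ge_atTop 1] with n hn
  exact (Jfun_eq_pos ha hb hn).symm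

lemma Jfun_tendsto {a b : ℝ} (hab : 0 < a ∧ 0 < b ∨ a < 0 ∧ b < 0) :
    Filter.Tendsto (fun n : ℕ => Jfun a b n) atTop (nhds (-(Real.log (a/b) : ℂ)/2)) := by
  rcases hab with ⟨ha, hb⟩ | ⟨ha, hb⟩
  · exact Jfun_tendsto_pos ha hb
  · have h := Jfun_tendsto_pos (a := -a) (b := -b) (by linarith) (by linarith)
    have hc : Continuous (starRingEnd ℂ) := Complex.continuous_conj
    have h2 := (hc.tendsto _).comp h
    have heq : (starRingEnd ℂ) (-(Real.log (-a / -b) : ℂ)/2) = -(Real.log (a/b) : ℂ)/2 := by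
      rw [neg_div_neg_eq]
      rw [map_div₀, map_neg, Complex.conj_ofReal]
      norm_num
      congr 1
      simp [Complex.conj_ofNat]
    rw [heq] at h2
    apply h2.congr
    intro n
    exact (Jfun_conj a b n).symm

lemma norm_exp_neg_I_mul (k t : ℝ) : ‖Complex.exp (-(Complex.I * k * t))‖ = 1 := by
  rw [Complex.norm_exp]
  simp

noncomputable def ft' (g : ℝ → ℂ) (k : ℝ) : ℂ :=
  (1 / Real.sqrt (2 * Real.pi)) * ∫ t : ℝ, g t * Complex.exp (-(Complex.I * k * t))

lemma ft'_continuous {g : ℝ → ℂ} (hg : Integrable g) : Continuous (ft' g) := by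
  apply Continuous.mul continuous_const
  apply MeasureTheory.continuous_of_dominated (bound := fun t => ‖g t‖)
  · intro k
    apply hg.1.mul
    apply Continuous.aestronglyMeasurable
    exact Complex.continuous_exp.comp (by continuity)
  · intro k
    filter_upwards with t
    rw [norm_mul, norm_exp_neg_I_mul, mul_one]
  · exact hg.norm
  · filter_upwards with t
    exact Continuous.mul continuous_const (Complex.continuous_exp.comp (by continuity))

lemma cov {I : Set ℝ} {x x' : ℝ → ℝ}
    (hderiv : ∀ y : ℝ, HasDerivAt x (x' y) y)
    (hx'pos : ∀ y : ℝ, 0 < x' y)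
    (hmono : StrictMono x)
    (hbij : Set.BijOn x Set.univ I)
    (f fc : ℝ → ℂ)
    (hfc : ∀ y : ℝ, fc (x y) = f y / ((x' y : ℝ) : ℂ))
    (hfc0 : ∀ u : ℝ, u ∉ I → fc u = 0)
    (H : ℝ → ℂ) :
    ∫ u : ℝ, fc u * H u = ∫ y : ℝ, f y * H (x y) := by
  have h1 : ∫ u : ℝ, fc u * H u = ∫ u in I, fc u * H u := by
    symm
    apply setIntegral_eq_integral_of_forall_compl_eq_zero
    intro u hu
    rw [hfc0 u hu, zero_mul]
  have hIeq : I = x '' Set.univ := (hbij.image_eq).symm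
  rw [h1, hIeq,
    integral_image_eq_integral_abs_deriv_smul MeasurableSet.univ
      (fun y _ => (hderiv y).hasDerivWithinAt) (hmono.injective.injOn) _,
    Measure.restrict_univ]
  apply MeasureTheory.integral_congr_ae
  filter_upwards with y
  have hx'ne : ((x' y : ℝ) : ℂ) ≠ 0 := by
    exact_mod_cast (hx'pos y).ne'
  rw [abs_of_pos (hx'pos y), hfc y, Complex.real_smul]
  field_simp

lemma diag_null : (volume : Measure (ℝ × ℝ)) {p : ℝ × ℝ | p.1 = p.2} = 0 := by
  have hms : MeasurableSet {p : ℝ × ℝ | p.1 = p.2} :=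
    measurableSet_eq_fun measurable_fst measurable_snd
  rw [Measure.volume_eq_prod ℝ ℝ, Measure.prod_apply hms]
  have : ∀ y₁ : ℝ, (Prod.mk y₁ ⁻¹' {p : ℝ × ℝ | p.1 = p.2}) = {y₁} := by
    intro y₁
    ext y₂
    simp [eq_comm]
  simp only [this]
  simp

lemma integrable_mul_exp {f : ℝ → ℂ} (hf : Integrable f) {w : ℝ → ℝ} (hw : Continuous w) (k : ℝ) :
    Integrable (fun y : ℝ => f y * Complex.exp (-(Complex.I * k * (w y : ℝ)))) := by
  have h1 : Integrable (fun y : ℝ => Complex.exp (-(Complex.I * k * (w y : ℝ))) * f y) := by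
    apply hf.bdd_mul
    · exact (Complex.continuous_exp.comp (by continuity)).aestronglyMeasurable
    · exact Filter.Eventually.of_forall fun y => le_of_eq (norm_exp_neg_I_mul k (w y))
  exact h1.congr (Filter.Eventually.of_forall fun y => mul_comm _ _)

noncomputable def cst : ℂ := (1:ℂ) / (Real.sqrt (2 * Real.pi) : ℂ)

lemma ft'_eq (g : ℝ → ℂ) (k : ℝ) :
    ft' g k = cst * ∫ t : ℝ, g t * Complex.exp (-(Complex.I * k * t)) := rfl

lemma cst_ne : cst ≠ 0 := by
  rw [cst]
  intro hcontra
  rw [div_eq_zero_iff] at hcontra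
  rcases hcontra with h | h
  · exact one_ne_zero h
  · have h' : Real.sqrt (2*Real.pi) = 0 := by exact_mod_cast h
    have hpos : 0 < Real.sqrt (2*Real.pi) := Real.sqrt_pos.2 (by positivity)
    linarith

lemma cst_sq : cst^2 * (-(1:ℂ)/2) = -(1 / (4 * (Real.pi : ℂ))) := by
  have hπ : (0:ℝ) ≤ 2 * Real.pi := by positivity
  have h2 : ((Real.sqrt (2 * Real.pi) : ℂ))^2 = ((2 * Real.pi : ℝ) : ℂ) := by
    rw [← Complex.ofReal_pow, Real.sq_sqrt hπ]
  have hne : ((Real.sqrt (2 * Real.pi) : ℂ)) ≠ 0 := by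
    have h : Real.sqrt (2 * Real.pi) ≠ 0 := by positivity
    exact_mod_cast h
  have hπne : (Real.pi : ℂ) ≠ 0 := by exact_mod_cast Real.pi_ne_zero
  rw [cst, div_pow, one_pow, h2]
  push_cast
  field_simp
  ring

lemma ft_eq_ft' : ft = ft' := rfl

theorem stmt2
    (I : Set ℝ) (hIopen : IsOpen I) (hIconn : I.OrdConnected)
    (x x' : ℝ → ℝ)
    (hderiv : ∀ y : ℝ, HasDerivAt x (x' y) y)
    (hx'cont : Continuous x')
    (hx'pos : ∀ y : ℝ, 0 < x' y)
    (hmono : StrictMono x)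
    (hbij : Set.BijOn x Set.univ I)
    (f₁ f₂ fc₁ fc₂ : ℝ → ℂ)
    (hf₁ : Integrable f₁) (hf₂ : Integrable f₂)
    (hfreq₁ : ∀ k ≤ (0:ℝ), ft f₁ k = 0) (hfreq₂ : ∀ k ≤ (0:ℝ), ft f₂ k = 0)
    (hfc₁ : ∀ y : ℝ, fc₁ (x y) = f₁ y / ((x' y : ℝ) : ℂ))
    (hfc₂ : ∀ y : ℝ, fc₂ (x y) = f₂ y / ((x' y : ℝ) : ℂ))
    (hfc₁0 : ∀ u : ℝ, u ∉ I → fc₁ u = 0)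
    (hfc₂0 : ∀ u : ℝ, u ∉ I → fc₂ u = 0)
    (hfc₁int : Integrable fc₁) (hfc₂int : Integrable fc₂)
    (hA : IntegrableOn (fun k : ℝ => ‖ft fc₂ k * ft fc₁ (-k)‖ / k) (Set.Ioi 0))
    (hG : Integrable (fun p : ℝ × ℝ =>
      f₁ p.1 * f₂ p.2 * (Real.log ((x p.1 - x p.2) / (p.1 - p.2)) : ℂ))) :
    ∫ k in Set.Ioi (0:ℝ), ft fc₂ k * ft fc₁ (-k) / (2 * (k : ℂ))
      = -(1 / (4 * (Real.pi : ℂ))) *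
          (∫ p : ℝ × ℝ, f₁ p.1 * (Real.log ((x p.1 - x p.2) / (p.1 - p.2)) : ℂ) * f₂ p.2) := by
  have hxcont : Continuous x := by
    apply continuous_iff_continuousAt.2
    intro y
    exact (hderiv y).continuousAt
  set a : ℝ × ℝ → ℝ := fun p => x p.2 - x p.1 with ha_def
  set b : ℝ × ℝ → ℝ := fun p => p.2 - p.1 with hb_def
  set F : ℝ → ℂ := fun k => ft fc₂ k * ft fc₁ (-k) with hF_def
  set g : ℝ × ℝ → ℂ := fun p => f₁ p.1 * f₂ p.2 with hg_def
  -- product formula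
  have hprod : ∀ k : ℝ, 0 < k →
      F k = cst^2 * ∫ p : ℝ × ℝ, g p *
        (Complex.exp (-(Complex.I * k * (a p : ℝ))) - Complex.exp (-(Complex.I * k * (b p : ℝ)))) := by
    intro k hk
    have hcov₂ : ft fc₂ k = cst * ∫ y : ℝ, f₂ y * Complex.exp (-(Complex.I * k * ((x y : ℝ) : ℂ))) := by
      rw [ft_eq_ft', ft'_eq,
        cov hderiv hx'pos hmono hbij f₂ fc₂ hfc₂ hfc₂0
          (fun u : ℝ => Complex.exp (-(Complex.I * k * ((u : ℝ) : ℂ))))]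
    have hcov₁ : ft fc₁ (-k) = cst * ∫ y : ℝ, f₁ y *
        Complex.exp (-(Complex.I * ((-k : ℝ) : ℂ) * ((x y : ℝ) : ℂ))) := by
      rw [ft_eq_ft', ft'_eq,
        cov hderiv hx'pos hmono hbij f₁ fc₁ hfc₁ hfc₁0
          (fun u : ℝ => Complex.exp (-(Complex.I * ((-k : ℝ) : ℂ) * ((u : ℝ) : ℂ))))]
    have hzero : ∫ y : ℝ, f₁ y * Complex.exp (-(Complex.I * ((-k : ℝ) : ℂ) * ((y : ℝ) : ℂ))) = 0 := by
      have h0 := hfreq₁ (-k) (by linarith)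
      rw [ft_eq_ft', ft'_eq] at h0
      rcases mul_eq_zero.1 h0 with h | h
      · exact absurd h cst_ne
      · exact h
    have e1 : ∀ u v : ℝ, Complex.exp (-(Complex.I * ((-k : ℝ) : ℂ) * (u:ℂ))) *
        Complex.exp (-(Complex.I * k * (v:ℂ))) = Complex.exp (-(Complex.I * k * ((v - u : ℝ) : ℂ))) := by
      intro u v
      rw [← Complex.exp_add]
      congr 1
      push_cast
      ring
    have hI₁x : Integrable (fun y : ℝ => f₁ y *
        Complex.exp (-(Complex.I * ((-k : ℝ) : ℂ) * ((x y : ℝ) : ℂ)))) := integrable_mul_exp hf₁ hxcont (-k)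
    have hI₂x : Integrable (fun y : ℝ => f₂ y *
        Complex.exp (-(Complex.I * (k : ℂ) * ((x y : ℝ) : ℂ)))) := integrable_mul_exp hf₂ hxcont k
    have hI₁id : Integrable (fun y : ℝ => f₁ y *
        Complex.exp (-(Complex.I * ((-k : ℝ) : ℂ) * ((y : ℝ) : ℂ)))) := integrable_mul_exp hf₁ continuous_id (-k)
    have hI₂id : Integrable (fun y : ℝ => f₂ y *
        Complex.exp (-(Complex.I * (k : ℂ) * ((y : ℝ) : ℂ)))) := integrable_mul_exp hf₂ continuous_id k
    have hmul1 : ∫ p : ℝ × ℝ, (f₁ p.1 * Complex.exp (-(Complex.I * ((-k : ℝ) : ℂ) * ((x p.1 : ℝ) : ℂ))))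
        * (f₂ p.2 * Complex.exp (-(Complex.I * (k:ℂ) * ((x p.2 : ℝ) : ℂ))))
        = (∫ y : ℝ, f₁ y * Complex.exp (-(Complex.I * ((-k : ℝ) : ℂ) * ((x y : ℝ) : ℂ))))
          * ∫ y : ℝ, f₂ y * Complex.exp (-(Complex.I * (k:ℂ) * ((x y : ℝ) : ℂ))) := by
      rw [Measure.volume_eq_prod ℝ ℝ]
      exact integral_prod_mul
        (fun y : ℝ => f₁ y * Complex.exp (-(Complex.I * ((-k : ℝ) : ℂ) * ((x y : ℝ) : ℂ))))
        (fun y : ℝ => f₂ y * Complex.exp (-(Complex.I * (k:ℂ) * ((x y : ℝ) : ℂ))))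
    have hmul0 : ∫ p : ℝ × ℝ, (f₁ p.1 * Complex.exp (-(Complex.I * ((-k : ℝ) : ℂ) * ((p.1 : ℝ) : ℂ))))
        * (f₂ p.2 * Complex.exp (-(Complex.I * (k:ℂ) * ((p.2 : ℝ) : ℂ))))
        = (∫ y : ℝ, f₁ y * Complex.exp (-(Complex.I * ((-k : ℝ) : ℂ) * ((y : ℝ) : ℂ))))
          * ∫ y : ℝ, f₂ y * Complex.exp (-(Complex.I * (k:ℂ) * ((y : ℝ) : ℂ))) := by
      rw [Measure.volume_eq_prod ℝ ℝ]
      exact integral_prod_mul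
        (fun y : ℝ => f₁ y * Complex.exp (-(Complex.I * ((-k : ℝ) : ℂ) * ((y : ℝ) : ℂ))))
        (fun y : ℝ => f₂ y * Complex.exp (-(Complex.I * (k:ℂ) * ((y : ℝ) : ℂ))))
    have hIxprod : Integrable (fun p : ℝ × ℝ =>
        (f₁ p.1 * Complex.exp (-(Complex.I * ((-k : ℝ) : ℂ) * ((x p.1 : ℝ) : ℂ))))
        * (f₂ p.2 * Complex.exp (-(Complex.I * (k:ℂ) * ((x p.2 : ℝ) : ℂ))))) := by
      rw [Measure.volume_eq_prod ℝ ℝ]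
      exact hI₁x.mul_prod hI₂x
    have hIidprod : Integrable (fun p : ℝ × ℝ =>
        (f₁ p.1 * Complex.exp (-(Complex.I * ((-k : ℝ) : ℂ) * ((p.1 : ℝ) : ℂ))))
        * (f₂ p.2 * Complex.exp (-(Complex.I * (k:ℂ) * ((p.2 : ℝ) : ℂ))))) := by
      rw [Measure.volume_eq_prod ℝ ℝ]
      exact hI₁id.mul_prod hI₂id
    have hptw : ∀ p : ℝ × ℝ, g p *
        (Complex.exp (-(Complex.I * k * ((a p : ℝ) : ℂ))) - Complex.exp (-(Complex.I * k * ((b p : ℝ) : ℂ))))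
        = (f₁ p.1 * Complex.exp (-(Complex.I * ((-k : ℝ) : ℂ) * ((x p.1 : ℝ) : ℂ))))
            * (f₂ p.2 * Complex.exp (-(Complex.I * (k:ℂ) * ((x p.2 : ℝ) : ℂ))))
          - (f₁ p.1 * Complex.exp (-(Complex.I * ((-k : ℝ) : ℂ) * ((p.1 : ℝ) : ℂ))))
            * (f₂ p.2 * Complex.exp (-(Complex.I * (k:ℂ) * ((p.2 : ℝ) : ℂ)))) := by
      intro p
      have h1 := e1 (x p.1) (x p.2)
      have h2 := e1 p.1 p.2
      simp only [hg_def, ha_def, hb_def]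
      rw [← h1, ← h2]
      ring
    calc F k = (cst * ∫ y : ℝ, f₂ y * Complex.exp (-(Complex.I * k * ((x y : ℝ) : ℂ))))
        * (cst * ∫ y : ℝ, f₁ y * Complex.exp (-(Complex.I * ((-k : ℝ) : ℂ) * ((x y : ℝ) : ℂ)))) := by
          rw [hF_def]
          rw [← hcov₂, ← hcov₁]
      _ = cst^2 * ((∫ y : ℝ, f₁ y * Complex.exp (-(Complex.I * ((-k : ℝ) : ℂ) * ((x y : ℝ) : ℂ))))
          * (∫ y : ℝ, f₂ y * Complex.exp (-(Complex.I * (k:ℂ) * ((x y : ℝ) : ℂ)))) - 0) := by ring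
      _ = cst^2 * ((∫ y : ℝ, f₁ y * Complex.exp (-(Complex.I * ((-k : ℝ) : ℂ) * ((x y : ℝ) : ℂ))))
          * (∫ y : ℝ, f₂ y * Complex.exp (-(Complex.I * (k:ℂ) * ((x y : ℝ) : ℂ))))
          - (∫ y : ℝ, f₁ y * Complex.exp (-(Complex.I * ((-k : ℝ) : ℂ) * ((y : ℝ) : ℂ))))
            * (∫ y : ℝ, f₂ y * Complex.exp (-(Complex.I * (k:ℂ) * ((y : ℝ) : ℂ))))) := by
          rw [hzero]
          ring
      _ = cst^2 * ∫ p : ℝ × ℝ, g p *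
          (Complex.exp (-(Complex.I * k * ((a p : ℝ) : ℂ))) - Complex.exp (-(Complex.I * k * ((b p : ℝ) : ℂ)))) := by
          rw [← hmul1, ← hmul0, ← integral_sub hIxprod hIidprod]
          congr 1
          apply MeasureTheory.integral_congr_ae
          filter_upwards with p
          exact (hptw p).symm
  -- LHS integrand integrable on Ioi 0
  have hFcont : Continuous F := by
    rw [hF_def, ft_eq_ft']
    exact (ft'_continuous hfc₂int).mul ((ft'_continuous hfc₁int).comp continuous_neg)
  have hGint : IntegrableOn (fun k : ℝ => F k / (2 * (k:ℂ))) (Set.Ioi 0) := by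
    apply Integrable.mono' hA
    · exact (hFcont.measurable.div (Complex.measurable_ofReal.const_mul 2)).aestronglyMeasurable
    · filter_upwards [ae_restrict_mem measurableSet_Ioi] with k hk
      have hk0 : 0 < k := hk
      rw [norm_div]
      have h2k : ‖(2 * (k:ℂ))‖ = 2 * k := by
        rw [show (2 * (k:ℂ)) = ((2*k : ℝ) : ℂ) by push_cast; ring, Complex.norm_real,
          Real.norm_eq_abs, abs_of_pos (by linarith)]
      rw [h2k]
      rw [show ‖ft fc₂ k * ft fc₁ (-k)‖ / k = ‖F k‖ / k from rfl]
      exact div_le_div_of_nonneg_left (norm_nonneg _) hk0 (by linarith)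
  have hgint : Integrable g := by
    rw [hg_def, Measure.volume_eq_prod ℝ ℝ]
    exact hf₁.mul_prod hf₂
  -- Step 1 : monotone limit of truncated integrals
  have hsets : ∀ n : ℕ, MeasurableSet (Set.Ioc ((n:ℝ)⁻¹) (n:ℝ)) := fun n => measurableSet_Ioc
  have hmonoS : Monotone (fun n : ℕ => Set.Ioc ((n:ℝ)⁻¹) (n:ℝ)) := by
    intro m n hmn
    rcases Nat.eq_zero_or_pos m with h0 | hm
    · subst h0; simp
    · have hm1 : (1:ℝ) ≤ (m:ℝ) := by exact_mod_cast hm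
      have hmn' : (m:ℝ) ≤ (n:ℝ) := by exact_mod_cast hmn
      apply Set.Ioc_subset_Ioc
      · exact inv_anti₀ (by linarith) hmn'
      · exact hmn'
  have hUnion : (⋃ n : ℕ, Set.Ioc ((n:ℝ)⁻¹) (n:ℝ)) = Set.Ioi (0:ℝ) := by
    ext k
    simp only [Set.mem_iUnion, Set.mem_Ioc, Set.mem_Ioi]
    constructor
    · rintro ⟨n, h1, h2⟩
      exact lt_of_le_of_lt (inv_nonneg.2 (Nat.cast_nonneg n)) h1
    · intro hk
      obtain ⟨n, hn⟩ := exists_nat_gt (max k k⁻¹)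
      have h1 : k⁻¹ < (n:ℝ) := lt_of_le_of_lt (le_max_right _ _) hn
      have h2 : k < (n:ℝ) := lt_of_le_of_lt (le_max_left _ _) hn
      have hn0 : (0:ℝ) < n := lt_trans hk h2
      refine ⟨n, ?_, h2.le⟩
      have h3 : k * k⁻¹ < k * n := mul_lt_mul_of_pos_left h1 hk
      rw [mul_inv_cancel₀ hk.ne'] at h3
      have h4 : (n:ℝ)⁻¹ * n < k * n := by
        rw [inv_mul_cancel₀ hn0.ne']
        exact h3
      exact lt_of_mul_lt_mul_right h4 hn0.le
  have hstep1 : Filter.Tendsto (fun n : ℕ => ∫ k in Set.Ioc ((n:ℝ)⁻¹) (n:ℝ), F k / (2 * (k:ℂ)))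
      atTop (nhds (∫ k in Set.Ioi (0:ℝ), F k / (2 * (k:ℂ)))) := by
    have := tendsto_setIntegral_of_monotone hsets hmonoS (by rw [hUnion]; exact hGint)
    rwa [hUnion] at this
  -- Step 2 : Fubini for each n ≥ 1
  have hswap : ∀ n : ℕ, 1 ≤ n →
      ∫ k in Set.Ioc ((n:ℝ)⁻¹) (n:ℝ), F k / (2 * (k:ℂ))
        = cst^2 * ∫ p : ℝ × ℝ, g p * Jfun (a p) (b p) n := by
    intro n hn
    have hn1 : (1:ℝ) ≤ (n:ℝ) := by exact_mod_cast hn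
    have hδpos : (0:ℝ) < ((n:ℝ))⁻¹ := by positivity
    set S := Set.Ioc ((n:ℝ)⁻¹) (n:ℝ) with hS_def
    have hfin : IsFiniteMeasure (volume.restrict S) :=
      ⟨by rw [Measure.restrict_apply_univ]; exact measure_Ioc_lt_top⟩
    have h1 : ∫ k in S, F k / (2 * (k:ℂ)) = ∫ k in S, cst^2 *
        ∫ p : ℝ × ℝ, g p * ((Complex.exp (-(Complex.I * k * ((a p : ℝ) : ℂ)))
          - Complex.exp (-(Complex.I * k * ((b p : ℝ) : ℂ)))) / (2 * (k:ℂ))) := by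
      apply setIntegral_congr_fun measurableSet_Ioc
      intro k hk
      have hk0 : 0 < k := lt_trans hδpos hk.1
      show F k / (2 * (k:ℂ)) = _
      rw [hprod k hk0, mul_div_assoc, ← MeasureTheory.integral_div]
      congr 1
      apply MeasureTheory.integral_congr_ae
      filter_upwards with p
      rw [mul_div_assoc]
    have hae1 : ∀ᵐ z ∂((volume.restrict S).prod (volume : Measure (ℝ × ℝ))), z.1 ∈ S := by
      rw [MeasureTheory.ae_iff]
      have hsub : {z : ℝ × (ℝ × ℝ) | ¬ z.1 ∈ S} ⊆ (Sᶜ) ×ˢ (Set.univ : Set (ℝ × ℝ)) :=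
        fun z hz => ⟨hz, trivial⟩
      refine measure_mono_null hsub ?_
      rw [Measure.prod_prod, Measure.restrict_apply (measurableSet_Ioc.compl)]
      simp [hS_def]
    have hInt : Integrable (Function.uncurry (fun (k : ℝ) (p : ℝ × ℝ) =>
        g p * ((Complex.exp (-(Complex.I * k * ((a p : ℝ) : ℂ)))
          - Complex.exp (-(Complex.I * k * ((b p : ℝ) : ℂ)))) / (2 * (k:ℂ)))))
        ((volume.restrict S).prod (volume : Measure (ℝ × ℝ))) := by
      have haesm : AEStronglyMeasurable (fun z : ℝ × (ℝ × ℝ) => g z.2)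
          ((volume.restrict S).prod (volume : Measure (ℝ × ℝ))) := hgint.1.comp_snd
      have hca : Continuous fun z : ℝ × (ℝ × ℝ) => -(Complex.I * (z.1:ℂ) * ((a z.2 : ℝ) : ℂ)) := by
        apply Continuous.neg
        apply Continuous.mul
        · exact continuous_const.mul (Complex.continuous_ofReal.comp continuous_fst)
        · exact Complex.continuous_ofReal.comp
            ((hxcont.comp (continuous_snd.comp continuous_snd)).sub
              (hxcont.comp (continuous_fst.comp continuous_snd)))
      have hcb : Continuous fun z : ℝ × (ℝ × ℝ) => -(Complex.I * (z.1:ℂ) * ((b z.2 : ℝ) : ℂ)) := by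
        apply Continuous.neg
        apply Continuous.mul
        · exact continuous_const.mul (Complex.continuous_ofReal.comp continuous_fst)
        · exact Complex.continuous_ofReal.comp
            ((continuous_snd.comp continuous_snd).sub (continuous_fst.comp continuous_snd))
      have hmeas2 : Measurable (fun z : ℝ × (ℝ × ℝ) =>
          (Complex.exp (-(Complex.I * z.1 * ((a z.2 : ℝ) : ℂ)))
            - Complex.exp (-(Complex.I * z.1 * ((b z.2 : ℝ) : ℂ)))) / (2 * (z.1:ℂ))) := by
        apply Measurable.div
        · exact ((Complex.continuous_exp.comp hca).measurable).sub
            ((Complex.continuous_exp.comp hcb).measurable)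
        · exact (Complex.measurable_ofReal.comp measurable_fst).const_mul 2
      apply Integrable.mono' (g := fun z : ℝ × (ℝ × ℝ) => (n:ℝ) * (‖f₁ z.2.1‖ * ‖f₂ z.2.2‖))
      · refine Integrable.mul_prod (f := fun _ : ℝ => (n:ℝ))
          (g := fun p : ℝ × ℝ => ‖f₁ p.1‖ * ‖f₂ p.2‖) (integrable_const _) ?_
        rw [Measure.volume_eq_prod ℝ ℝ]
        exact hf₁.norm.mul_prod hf₂.norm
      · exact haesm.mul hmeas2.aestronglyMeasurable
      · filter_upwards [hae1] with z hz
        have hk0 : 0 < z.1 := lt_trans hδpos hz.1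
        have hkn : 1 / z.1 ≤ (n:ℝ) := by
          have := one_div_lt_one_div_of_lt hδpos hz.1
          rw [show (1:ℝ)/((n:ℝ))⁻¹ = (n:ℝ) by field_simp] at this
          exact this.le
        rw [Function.uncurry]
        calc ‖g z.2 * ((Complex.exp (-(Complex.I * z.1 * ((a z.2 : ℝ) : ℂ)))
            - Complex.exp (-(Complex.I * z.1 * ((b z.2 : ℝ) : ℂ)))) / (2 * (z.1:ℂ)))‖
            = ‖g z.2‖ * (‖Complex.exp (-(Complex.I * z.1 * ((a z.2 : ℝ) : ℂ)))
              - Complex.exp (-(Complex.I * z.1 * ((b z.2 : ℝ) : ℂ)))‖ / ‖(2 * (z.1:ℂ))‖) := by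
              rw [norm_mul, norm_div]
          _ ≤ ‖g z.2‖ * (2 / (2 * z.1)) := by
              apply mul_le_mul_of_nonneg_left ?_ (norm_nonneg _)
              have hden : ‖(2 * (z.1:ℂ))‖ = 2 * z.1 := by
                rw [show (2 * (z.1:ℂ)) = ((2 * z.1 : ℝ) : ℂ) by push_cast; ring,
                  Complex.norm_real, Real.norm_eq_abs, abs_of_pos (by linarith)]
              rw [hden]
              apply div_le_div_of_nonneg_right ?_ (by linarith)
              calc ‖Complex.exp (-(Complex.I * z.1 * ((a z.2 : ℝ) : ℂ)))
                  - Complex.exp (-(Complex.I * z.1 * ((b z.2 : ℝ) : ℂ)))‖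
                  ≤ ‖Complex.exp (-(Complex.I * z.1 * ((a z.2 : ℝ) : ℂ)))‖
                    + ‖Complex.exp (-(Complex.I * z.1 * ((b z.2 : ℝ) : ℂ)))‖ := norm_sub_le _ _
                _ = 2 := by rw [norm_exp_neg_I_mul, norm_exp_neg_I_mul]; norm_num
          _ = ‖g z.2‖ * (1 / z.1) := by congr 1; field_simp
          _ ≤ ‖g z.2‖ * (n:ℝ) := mul_le_mul_of_nonneg_left hkn (norm_nonneg _)
          _ = (n:ℝ) * (‖f₁ z.2.1‖ * ‖f₂ z.2.2‖) := by
              rw [hg_def, norm_mul]; ring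
    have h2 := integral_integral_swap hInt
    rw [h1, MeasureTheory.integral_const_mul]
    congr 1
    rw [h2]
    apply MeasureTheory.integral_congr_ae
    filter_upwards with p
    rw [MeasureTheory.integral_const_mul]
    rfl
  -- Step 3 : dominated convergence
  have hae_diag : ∀ᵐ p : ℝ × ℝ, p.1 ≠ p.2 := by
    rw [MeasureTheory.ae_iff]
    have : {p : ℝ × ℝ | ¬ p.1 ≠ p.2} = {p : ℝ × ℝ | p.1 = p.2} := by ext p; simp
    rw [this]
    exact diag_null
  have hsign : ∀ p : ℝ × ℝ, p.1 ≠ p.2 → (0 < a p ∧ 0 < b p ∨ a p < 0 ∧ b p < 0) := by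
    intro p hp
    rcases lt_or_gt_of_ne hp with h | h
    · left
      exact ⟨sub_pos.2 (hmono h), sub_pos.2 h⟩
    · right
      exact ⟨sub_neg.2 (hmono h), sub_neg.2 h⟩
  have hlogab : ∀ p : ℝ × ℝ, Real.log ((x p.1 - x p.2) / (p.1 - p.2)) = Real.log (a p / b p) := by
    intro p
    congr 1
    rw [show x p.1 - x p.2 = -(a p) by simp [ha_def],
      show p.1 - p.2 = -(b p) by simp [hb_def], neg_div_neg_eq]
  have hJcont : ∀ n : ℕ, Continuous (fun p : ℝ × ℝ => Jfun (a p) (b p) n) := by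
    intro n
    apply MeasureTheory.continuous_of_dominated (bound := fun _ => (n:ℝ))
    · intro p
      apply Measurable.aestronglyMeasurable
      apply Measurable.div
      · have hca : Continuous fun k : ℝ => -(Complex.I * (k:ℂ) * ((a p : ℝ) : ℂ)) :=
          ((continuous_const.mul Complex.continuous_ofReal).mul continuous_const).neg
        have hcb : Continuous fun k : ℝ => -(Complex.I * (k:ℂ) * ((b p : ℝ) : ℂ)) :=
          ((continuous_const.mul Complex.continuous_ofReal).mul continuous_const).neg
        exact ((Complex.continuous_exp.comp hca).measurable).sub
          ((Complex.continuous_exp.comp hcb).measurable)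
      · exact Complex.measurable_ofReal.const_mul 2
    · intro p
      filter_upwards [ae_restrict_mem measurableSet_Ioc] with k hk
      have hk0 : 0 < k := lt_of_le_of_lt (inv_nonneg.2 (Nat.cast_nonneg n)) hk.1
      have hnn0 : (0:ℝ) < (n:ℝ) := lt_of_lt_of_le hk0 hk.2
      have hδpos : (0:ℝ) < ((n:ℝ))⁻¹ := by positivity
      have hkn : 1 / k ≤ (n:ℝ) := by
        have := one_div_lt_one_div_of_lt hδpos hk.1
        rw [show (1:ℝ)/((n:ℝ))⁻¹ = (n:ℝ) by field_simp] at this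
        exact this.le
      rw [norm_div]
      have hden : ‖(2 * (k:ℂ))‖ = 2 * k := by
        rw [show (2 * (k:ℂ)) = ((2 * k : ℝ) : ℂ) by push_cast; ring,
          Complex.norm_real, Real.norm_eq_abs, abs_of_pos (by linarith)]
      rw [hden]
      calc ‖Complex.exp (-(Complex.I * k * ((a p : ℝ) : ℂ)))
          - Complex.exp (-(Complex.I * k * ((b p : ℝ) : ℂ)))‖ / (2 * k)
          ≤ 2 / (2 * k) := by
            apply div_le_div_of_nonneg_right ?_ (by linarith)
            calc ‖Complex.exp (-(Complex.I * k * ((a p : ℝ) : ℂ)))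
                - Complex.exp (-(Complex.I * k * ((b p : ℝ) : ℂ)))‖
                ≤ ‖Complex.exp (-(Complex.I * k * ((a p : ℝ) : ℂ)))‖
                  + ‖Complex.exp (-(Complex.I * k * ((b p : ℝ) : ℂ)))‖ := norm_sub_le _ _
              _ = 2 := by rw [norm_exp_neg_I_mul, norm_exp_neg_I_mul]; norm_num
        _ = 1 / k := by field_simp
        _ ≤ (n:ℝ) := hkn
    · exact integrableOn_const measure_Ioc_lt_top.ne
    · filter_upwards with k
      apply Continuous.div_const
      apply Continuous.sub
      · apply Complex.continuous_exp.comp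
        apply Continuous.neg
        apply continuous_const.mul
        exact Complex.continuous_ofReal.comp
          ((hxcont.comp continuous_snd).sub (hxcont.comp continuous_fst))
      · apply Complex.continuous_exp.comp
        apply Continuous.neg
        apply continuous_const.mul
        exact Complex.continuous_ofReal.comp (continuous_snd.sub continuous_fst)
  have hstep3 : Filter.Tendsto (fun n : ℕ => ∫ p : ℝ × ℝ, g p * Jfun (a p) (b p) n) atTop
      (nhds (∫ p : ℝ × ℝ, g p * (-(Real.log (a p / b p) : ℂ)/2))) := by
    apply MeasureTheory.tendsto_integral_of_dominated_convergence
      (bound := fun p : ℝ × ℝ => ‖f₁ p.1 * f₂ p.2 * (Real.log ((x p.1 - x p.2) / (p.1 - p.2)) : ℂ)‖)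
    · exact fun n => hgint.1.mul (hJcont n).aestronglyMeasurable
    · exact hG.norm
    · intro n
      filter_upwards [hae_diag] with p hp
      rw [norm_mul]
      have hrhs : ‖f₁ p.1 * f₂ p.2 * (Real.log ((x p.1 - x p.2) / (p.1 - p.2)) : ℂ)‖
          = ‖g p‖ * |Real.log (a p / b p)| := by
        rw [norm_mul, hlogab p, Complex.norm_real, Real.norm_eq_abs, hg_def]
      rw [hrhs]
      exact mul_le_mul_of_nonneg_left (Jfun_bound (hsign p hp) n) (norm_nonneg _)
    · filter_upwards [hae_diag] with p hp
      exact (Jfun_tendsto (hsign p hp)).const_mul (g p)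
  -- combine
  have hlim2 : Filter.Tendsto (fun n : ℕ => ∫ k in Set.Ioc ((n:ℝ)⁻¹) (n:ℝ), F k / (2 * (k:ℂ)))
      atTop (nhds (cst^2 * ∫ p : ℝ × ℝ, g p * (-(Real.log (a p / b p) : ℂ)/2))) := by
    apply Filter.Tendsto.congr' ?_ (hstep3.const_mul (cst^2))
    filter_upwards [Filter.eventually_ge_atTop 1] with n hn
    exact (hswap n hn).symm
  have hkey := tendsto_nhds_unique hstep1 hlim2
  have hfinal : ∫ p : ℝ × ℝ, g p * (-(Real.log (a p / b p) : ℂ)/2)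
      = (-(1:ℂ)/2) * ∫ p : ℝ × ℝ, f₁ p.1 * (Real.log ((x p.1 - x p.2) / (p.1 - p.2)) : ℂ) * f₂ p.2 := by
    rw [← MeasureTheory.integral_const_mul]
    apply MeasureTheory.integral_congr_ae
    filter_upwards with p
    rw [← hlogab p]
    simp only [hg_def]
    ring
  calc ∫ k in Set.Ioi (0:ℝ), ft fc₂ k * ft fc₁ (-k) / (2 * (k : ℂ))
      = ∫ k in Set.Ioi (0:ℝ), F k / (2 * (k:ℂ)) := rfl
    _ = cst^2 * ∫ p : ℝ × ℝ, g p * (-(Real.log (a p / b p) : ℂ)/2) := hkey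
    _ = cst^2 * ((-(1:ℂ)/2) * ∫ p : ℝ × ℝ, f₁ p.1 * (Real.log ((x p.1 - x p.2) / (p.1 - p.2)) : ℂ) * f₂ p.2) := by
        rw [hfinal]
    _ = -(1 / (4 * (Real.pi : ℂ))) *
          (∫ p : ℝ × ℝ, f₁ p.1 * (Real.log ((x p.1 - x p.2) / (p.1 - p.2)) : ℂ) * f₂ p.2) := by
        rw [← mul_assoc, cst_sq]
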